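/- The quaternion group Q_8 embeds in the group W(D_4) of even signed permutations of rank 4, and consequently μ(W(D_4)) = 8. -/

import Mathlib

noncomputable def minFaithfulDegree (G : Type*) [Group G] : ℕ :=
  sInf {n : ℕ | ∃ f : G →* Equiv.Perm (Fin n), Function.Injective f}

/-- The Coxeter group `W(B_n) = C₂ ≀ Sym(n)`, as the semidirect product of the base
group `(C₂)ⁿ` with `Sym(n)` permuting the coordinates. -/
abbrev WB (n : ℕ) : Type :=
  (Fin n → Multiplicative (ZMod 2)) ⋊[mulAutArrow] Equiv.Perm (Fin n)

/-- The product-of-signs homomorphism `W(B_n) → C₂`. -/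
noncomputable def signSum (n : ℕ) : WB n →* Multiplicative (ZMod 2) :=
  SemidirectProduct.lift
    (MonoidHom.mk' (fun f => ∏ i, f i) (by
      intro a b
      simp [Finset.prod_mul_distrib]))
    1
    (by
      intro σ
      refine MonoidHom.ext fun f => ?_
      simp only [MonoidHom.comp_apply, MulEquiv.coe_toMonoidHom, MonoidHom.mk'_apply,
        MulAut.conj_apply, MonoidHom.one_apply, mul_one, one_mul, inv_one]
      show (∏ i, mulAutArrow σ f i) = ∏ i, f i
      have h1 : ∀ i, mulAutArrow σ f i = f (σ⁻¹ i) := fun i => rfl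
      simp only [h1]
      exact Equiv.prod_comp σ⁻¹ f)

/-- The Coxeter group `W(D_n)`, the subgroup of even signed permutations in `W(B_n)`. -/
noncomputable abbrev WD (n : ℕ) : Subgroup (WB n) := (signSum n).ker

open Equiv

-- equiv of semidirect product with product type
def sdpEquiv {N G : Type*} [Group N] [Group G] (φ : G →* MulAut N) :
    (N ⋊[φ] G) ≃ N × G where
  toFun x := (x.left, x.right)
  invFun p := ⟨p.1, p.2⟩
  left_inv x := rfl
  right_inv p := rfl

instance {N G : Type*} [Group N] [Group G] {φ : G →* MulAut N} [DecidableEq N] [DecidableEq G] :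
    DecidableEq (N ⋊[φ] G) := Equiv.decidableEq (sdpEquiv φ)

instance {N G : Type*} [Group N] [Group G] {φ : G →* MulAut N} [Fintype N] [Fintype G] :
    Fintype (N ⋊[φ] G) := Fintype.ofEquiv _ (sdpEquiv φ).symm

-- Perm congruence as MulEquiv
def permMulEquiv {α β : Type*} (e : α ≃ β) : Perm α ≃* Perm β :=
  { e.permCongr with
    map_mul' := fun p q => (e.permCongr_trans q p).symm }

-- faithful action of WB n on n × 2 points
def toPerm (n : ℕ) : WB n →* Perm (Fin n × ZMod 2) where
  toFun g :=
    { toFun := fun p => (g.right p.1, p.2 + Multiplicative.toAdd (g.left (g.right p.1)))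
      invFun := fun p => (g.right⁻¹ p.1, p.2 - Multiplicative.toAdd (g.left p.1))
      left_inv := fun p => by simp
      right_inv := fun p => by simp }
  map_one' := by
    ext p <;> simp
  map_mul' g h := by
    ext p
    · rfl
    · show p.2 + Multiplicative.toAdd ((g.left * mulAutArrow g.right h.left) _) = _
      have h1 : ∀ (σ : Perm (Fin n)) (f : Fin n → Multiplicative (ZMod 2)) i,
          mulAutArrow σ f i = f (σ⁻¹ i) := fun _ _ _ => rfl
      show _ = (p.2 + Multiplicative.toAdd (h.left (h.right p.1))) +
        Multiplicative.toAdd (g.left (g.right (h.right p.1)))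
      simp only [Pi.mul_apply, h1, toAdd_mul]
      show p.2 + (Multiplicative.toAdd (g.left ((g.right * h.right) p.1)) +
        Multiplicative.toAdd (mulAutArrow g.right h.left ((g.right * h.right) p.1))) = _
      rw [h1]
      have : (g.right⁻¹ : Perm (Fin n)) ((g.right * h.right) p.1) = h.right p.1 := by
        simp [Equiv.Perm.mul_apply]
      rw [this]
      show p.2 + _ = _
      have : (g.right * h.right) p.1 = g.right (h.right p.1) := rfl
      rw [this]
      abel

theorem toPerm_injective (n : ℕ) : Function.Injective (toPerm n) := by
  rw [injective_iff_map_eq_one]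
  intro g hg
  have hfun : ∀ p : Fin n × ZMod 2,
      (g.right p.1, p.2 + Multiplicative.toAdd (g.left (g.right p.1))) = p := fun p =>
    congr($hg p)
  have hright : g.right = 1 :=
    Equiv.ext fun i => congrArg Prod.fst (hfun (i, 0))
  have hleft : g.left = 1 := by
    funext i
    have h2 := congrArg Prod.snd (hfun (g.right⁻¹ i, 0))
    simp only [Equiv.Perm.coe_inv, Equiv.apply_symm_apply, zero_add] at h2
    exact (Multiplicative.toAdd).injective (by simpa using h2)
  exact SemidirectProduct.ext hleft hright

theorem card_WB4 : Nat.card (WB 4) = 384 := by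
  rw [Nat.card_congr (sdpEquiv _), Nat.card_prod]
  simp [Fintype.card_perm, Nat.card_eq_fintype_card, Nat.factorial]

theorem signSum_surj : Function.Surjective (signSum 4) := by
  intro y
  have hy : ∀ z : Multiplicative (ZMod 2), z = 1 ∨ z = Multiplicative.ofAdd 1 := by decide
  rcases hy y with h | h
  · exact ⟨1, by rw [h, map_one]⟩
  · refine ⟨SemidirectProduct.inl (Pi.mulSingle 0 (Multiplicative.ofAdd 1)), ?_⟩
    rw [h]
    show (∏ i, Pi.mulSingle (0 : Fin 4) (Multiplicative.ofAdd (1 : ZMod 2)) i) = _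
    decide

theorem card_WD4 : Nat.card (WD 4) = 192 := by
  have h := Subgroup.card_eq_card_quotient_mul_card_subgroup (WD 4)
  rw [card_WB4] at h
  have h2 : Nat.card (WB 4 ⧸ WD 4) = 2 := by
    rw [Nat.card_congr (QuotientGroup.quotientKerEquivOfSurjective _ signSum_surj).toEquiv]
    simp
  rw [h2] at h
  omega

-- Q8 generators as even signed permutations (left multiplication by i and j on ℍ)
def qA : WB 4 :=
  ⟨![Multiplicative.ofAdd 1, 1, Multiplicative.ofAdd 1, 1],
    Equiv.swap 0 1 * Equiv.swap 2 3⟩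

def qX : WB 4 :=
  ⟨![Multiplicative.ofAdd 1, 1, 1, Multiplicative.ofAdd 1],
    Equiv.swap 0 2 * Equiv.swap 1 3⟩

def q8fun : QuaternionGroup 2 → WB 4
  | .a k => qA ^ k.val
  | .xa k => qX * qA ^ k.val

example : qA^4 = 1 := by decide
example : qA^2 = qX^2 := by decide
example : qX * qA * qX⁻¹ = qA⁻¹ := by decide
example : qA^2 ≠ 1 := by decide

theorem q8fun_mul : ∀ x y : QuaternionGroup 2, q8fun (x * y) = q8fun x * q8fun y := by
  decide

theorem q8fun_inj : Function.Injective q8fun := by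
  intro x y
  revert x y
  decide

theorem q8fun_mem : ∀ x, q8fun x ∈ WD 4 := by
  intro x
  show signSum 4 (q8fun x) = 1
  revert x
  decide

noncomputable def q8hom : QuaternionGroup 2 →* ↥(WD 4) :=
  (MonoidHom.mk' q8fun q8fun_mul).codRestrict (WD 4) q8fun_mem

theorem q8hom_inj : Function.Injective q8hom := fun a b h =>
  q8fun_inj (congrArg Subtype.val h)

noncomputable def embed8 : ↥(WD 4) →* Perm (Fin 8) :=
  (permMulEquiv (Fintype.equivFinOfCardEq (by simp) :
      Fin 4 × ZMod 2 ≃ Fin 8)).toMonoidHom.comp ((toPerm 4).comp (WD 4).subtype)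

theorem embed8_inj : Function.Injective embed8 := by
  intro a b h
  have h2 := (permMulEquiv (Fintype.equivFinOfCardEq (by simp) :
      Fin 4 × ZMod 2 ≃ Fin 8)).injective h
  exact (WD 4).subtype_injective (toPerm_injective 4 h2)


/-- The quaternion group `Q₈` embeds in `W(D₄)`, the group of even signed permutations
of rank `4`, and consequently `μ(W(D₄)) = 8`. -/
theorem Q8_embeds_WD4_and_mu :
    (∃ f : QuaternionGroup 2 →* ↥(WD 4), Function.Injective f) ∧
      minFaithfulDegree ↥(WD 4) = 8 := by
  refine ⟨⟨q8hom, q8hom_inj⟩, ?_⟩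
  refine IsLeast.csInf_eq ⟨⟨embed8, embed8_inj⟩, ?_⟩
  rintro n ⟨f, hf⟩
  by_contra hlt
  push_neg at hlt
  have h1 : Nat.card ↥(WD 4) ∣ Nat.card (Perm (Fin n)) :=
    (Nat.card_congr (MonoidHom.ofInjective hf).toEquiv).dvd.trans
      (Subgroup.card_subgroup_dvd_card _)
  rw [card_WD4, Nat.card_eq_fintype_card, Fintype.card_perm, Fintype.card_fin] at h1
  have h2 : Nat.factorial n ∣ Nat.factorial 7 := Nat.factorial_dvd_factorial (by omega)
  exact absurd (h1.trans h2) (by decide)
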